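/- arXiv:1701.02134 — 3 statements merged into one kernel-verified Lean document; each statement's English description precedes it below -/
import Mathlib

section
/- Let U ⊆ ℂ be open, y : U → ℂ holomorphic, and a, b, c > 0. Define f : U → ℝ³ by f = (2a Re y, 2b Im y, c(1 − |y|²)) / (1 + |y|²) (the affine image, with axes scaled by a, b, c, of the inverse stereographic projection of y to the unit sphere). Then, with B_ℂ the complex-bilinear extension of the Euclidean inner product on ℝ³ and f_z := ½(f_u − i f_v) taken with respect to z = u + iv, one has B_ℂ(f_z, f_z) = (y′)² · ( a²(1 − ȳ²)² − b²(1 + ȳ²)² + 4c² ȳ² ) / (1 + |y|²)⁴ at every point of U, where y′ is the complex derivative of y. (Paper: Section 2, derivation of equation (orthoEE).) -/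
/-- Componentwise inclusion `ℝ³ ↪ ℂ³`. -/
noncomputable def toC (x : ℝ × ℝ × ℝ) : ℂ × ℂ × ℂ := ((x.1 : ℂ), (x.2.1 : ℂ), (x.2.2 : ℂ))

/-- Partial derivatives of a map `f : ℂ → ℝ³` with respect to the real coordinates
`z = u + iv`. -/
noncomputable def pdu (f : ℂ → ℝ × ℝ × ℝ) (p : ℂ) : ℝ × ℝ × ℝ := fderiv ℝ f p 1
noncomputable def pdv (f : ℂ → ℝ × ℝ × ℝ) (p : ℂ) : ℝ × ℝ × ℝ := fderiv ℝ f p Complex.I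

/-- `f_z := ½ (f_u − i f_v)`, regarded as a vector in `ℂ³`. -/
noncomputable def pdz (f : ℂ → ℝ × ℝ × ℝ) (p : ℂ) : ℂ × ℂ × ℂ :=
  (1 / 2 : ℂ) • (toC (pdu f p) - Complex.I • toC (pdv f p))

/-- The complex-bilinear extension of the Euclidean inner product of `ℝ³` to `ℂ³`. -/
def BEc (x y : ℂ × ℂ × ℂ) : ℂ := x.1 * y.1 + x.2.1 * y.2.1 + x.2.2 * y.2.2

set_option maxHeartbeats 2000000 in
/-- **Section 2, derivation of (orthoEE).** For the affine image, with axes scaled by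
`a, b, c`, of the inverse stereographic projection of a holomorphic function `y`, one has
`B_ℂ(f_z, f_z) = (y′)² (a²(1−ȳ²)² − b²(1+ȳ²)² + 4c²ȳ²) / (1+|y|²)⁴`. -/
theorem fz_fz_of_scaled_stereographic
    (U : Set ℂ) (hUopen : IsOpen U)
    (y : ℂ → ℂ) (hy : DifferentiableOn ℂ y U)
    (a b c : ℝ) (ha : 0 < a) (hb : 0 < b) (hc : 0 < c)
    (f : ℂ → ℝ × ℝ × ℝ)
    (hf : ∀ z, f z =
      (2 * a * (y z).re / (1 + Complex.normSq (y z)),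
       2 * b * (y z).im / (1 + Complex.normSq (y z)),
       c * (1 - Complex.normSq (y z)) / (1 + Complex.normSq (y z)))) :
    ∀ p ∈ U,
      BEc (pdz f p) (pdz f p) =
        (deriv y p) ^ 2 *
          ((a : ℂ) ^ 2 * (1 - (starRingEnd ℂ) (y p) ^ 2) ^ 2
            - (b : ℂ) ^ 2 * (1 + (starRingEnd ℂ) (y p) ^ 2) ^ 2
            + 4 * (c : ℂ) ^ 2 * (starRingEnd ℂ) (y p) ^ 2) /
          ((1 + Complex.normSq (y p) : ℝ) : ℂ) ^ 4 := by
  intro p hp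
  have hyd : DifferentiableAt ℂ y p := hy.differentiableAt (hUopen.mem_nhds hp)
  have hA := hyd.hasDerivAt
  have hAr := hA.hasFDerivAt.restrictScalars ℝ
  have hre := (Complex.reCLM.hasFDerivAt).comp p hAr
  have him := (Complex.imCLM.hasFDerivAt).comp p hAr
  have hN := ((hre.mul hre).add (him.mul him)).congr_of_eventuallyEq
    (Filter.Eventually.of_forall fun z =>
      (by simp [Complex.normSq_apply, Function.comp] :
        Complex.normSq (y z) = (⇑Complex.reCLM ∘ y) z * (⇑Complex.reCLM ∘ y) z
          + (⇑Complex.imCLM ∘ y) z * (⇑Complex.imCLM ∘ y) z))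
  have hD0 : (1 + Complex.normSq (y p)) ≠ 0 := by
    have := Complex.normSq_nonneg (y p); intro h0; linarith
  have hD := hN.const_add 1
  have hInv := (hasDerivAt_inv hD0).comp_hasFDerivAt p hD
  have h1 := (hre.const_mul (2*a)).mul hInv
  have h2 := (him.const_mul (2*b)).mul hInv
  have h3 := ((hN.const_sub 1).const_mul c).mul hInv
  have hF : HasFDerivAt f _ p := (HasFDerivAt.prodMk h1 (HasFDerivAt.prodMk h2 h3)).congr_of_eventuallyEq
    (Filter.Eventually.of_forall fun z => by
      rw [hf z]; simp [div_eq_mul_inv, Function.comp])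
  have hw : (starRingEnd ℂ) (y p) = ((y p).re : ℂ) - (y p).im * Complex.I := by
    simp [Complex.ext_iff]
  have hA' : deriv y p = ((deriv y p).re : ℂ) + (deriv y p).im * Complex.I :=
    (Complex.re_add_im _).symm
  have hDr : (1 : ℝ) + ((y p).re * (y p).re + (y p).im * (y p).im) ≠ 0 := by
    nlinarith [sq_nonneg ((y p).re), sq_nonneg ((y p).im)]
  have hDc : (((1 + Complex.normSq (y p) : ℝ)) : ℂ) ≠ 0 := by exact_mod_cast hD0
  have eval : ∀ t : ℂ, fderiv ℝ f p t = _ := fun t => by rw [hF.fderiv]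
  have hz1 : (pdz f p).1 =
      deriv y p * (a * (1 - (starRingEnd ℂ) (y p) ^ 2)) /
        (((1 + Complex.normSq (y p) : ℝ)) : ℂ) ^ 2 := by
    simp only [pdz, pdu, pdv, toC, hF.fderiv, Prod.smul_fst, Prod.fst_sub, smul_eq_mul]
    simp only [ContinuousLinearMap.prod_apply, ContinuousLinearMap.add_apply,
      ContinuousLinearMap.coe_smul', Pi.smul_apply, ContinuousLinearMap.coe_comp',
      Function.comp, ContinuousLinearMap.coe_restrictScalars',
      ContinuousLinearMap.smulRight_apply, ContinuousLinearMap.one_apply, smul_eq_mul,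
      ContinuousLinearMap.toSpanSingleton_apply,
      one_smul, Complex.one_re, Complex.one_im, ContinuousLinearMap.neg_apply,
      Complex.reCLM_apply, Complex.imCLM_apply, Complex.mul_re, Complex.mul_im,
      Complex.I_re, Complex.I_im]
    conv_rhs => rw [hw, hA']
    rw [eq_div_iff (pow_ne_zero _ hDc), Complex.ext_iff]
    simp only [Complex.normSq_apply, Complex.mul_re, Complex.mul_im, Complex.add_re,
      Complex.add_im, Complex.sub_re, Complex.sub_im, Complex.one_re, Complex.one_im,
      Complex.ofReal_re, Complex.ofReal_im, Complex.I_re, Complex.I_im, pow_two,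
      Complex.ofReal_pow, Complex.div_re,
      Complex.div_ofNat_re, Complex.div_ofNat_im, Complex.re_ofNat, Complex.im_ofNat]
    constructor <;> (field_simp; ring)
  have hz2 : (pdz f p).2.1 =
      deriv y p * (-(b : ℂ) * Complex.I * (1 + (starRingEnd ℂ) (y p) ^ 2)) /
        (((1 + Complex.normSq (y p) : ℝ)) : ℂ) ^ 2 := by
    simp only [pdz, pdu, pdv, toC, hF.fderiv, Prod.smul_snd, Prod.snd_sub, Prod.smul_fst,
      Prod.fst_sub, smul_eq_mul]
    simp only [ContinuousLinearMap.prod_apply, ContinuousLinearMap.add_apply,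
      ContinuousLinearMap.coe_smul', Pi.smul_apply, ContinuousLinearMap.coe_comp',
      Function.comp, ContinuousLinearMap.coe_restrictScalars',
      ContinuousLinearMap.smulRight_apply, ContinuousLinearMap.one_apply, smul_eq_mul,
      ContinuousLinearMap.toSpanSingleton_apply,
      one_smul, Complex.one_re, Complex.one_im, ContinuousLinearMap.neg_apply,
      Complex.reCLM_apply, Complex.imCLM_apply, Complex.mul_re, Complex.mul_im,
      Complex.I_re, Complex.I_im]
    conv_rhs => rw [hw, hA']
    rw [eq_div_iff (pow_ne_zero _ hDc), Complex.ext_iff]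
    simp only [Complex.normSq_apply, Complex.mul_re, Complex.mul_im, Complex.add_re,
      Complex.add_im, Complex.sub_re, Complex.sub_im, Complex.one_re, Complex.one_im,
      Complex.ofReal_re, Complex.ofReal_im, Complex.I_re, Complex.I_im, pow_two,
      Complex.ofReal_pow, Complex.neg_re, Complex.neg_im,
      Complex.div_ofNat_re, Complex.div_ofNat_im, Complex.re_ofNat, Complex.im_ofNat]
    constructor <;> (field_simp; ring)
  have hz3 : (pdz f p).2.2 =
      deriv y p * (-2 * c * (starRingEnd ℂ) (y p)) /
        (((1 + Complex.normSq (y p) : ℝ)) : ℂ) ^ 2 := by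
    simp only [pdz, pdu, pdv, toC, hF.fderiv, Prod.smul_snd, Prod.snd_sub, smul_eq_mul]
    simp only [ContinuousLinearMap.prod_apply, ContinuousLinearMap.add_apply,
      ContinuousLinearMap.coe_smul', Pi.smul_apply, ContinuousLinearMap.coe_comp',
      Function.comp, ContinuousLinearMap.coe_restrictScalars',
      ContinuousLinearMap.smulRight_apply, ContinuousLinearMap.one_apply, smul_eq_mul,
      ContinuousLinearMap.toSpanSingleton_apply,
      one_smul, Complex.one_re, Complex.one_im, ContinuousLinearMap.neg_apply,
      Complex.reCLM_apply, Complex.imCLM_apply, Complex.mul_re, Complex.mul_im,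
      Complex.I_re, Complex.I_im]
    conv_rhs => rw [hw, hA']
    rw [eq_div_iff (pow_ne_zero _ hDc), Complex.ext_iff]
    simp only [Complex.normSq_apply, Complex.mul_re, Complex.mul_im, Complex.add_re,
      Complex.add_im, Complex.sub_re, Complex.sub_im, Complex.one_re, Complex.one_im,
      Complex.ofReal_re, Complex.ofReal_im, Complex.I_re, Complex.I_im, pow_two,
      Complex.ofReal_pow, Complex.neg_re, Complex.neg_im,
      Complex.div_ofNat_re, Complex.div_ofNat_im, Complex.re_ofNat, Complex.im_ofNat]
    constructor <;> (field_simp; ring)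
  rw [BEc, hz1, hz2, hz3]
  have h4 : (((1 + Complex.normSq (y p) : ℝ)) : ℂ) ^ 4 =
      ((((1 + Complex.normSq (y p) : ℝ)) : ℂ) ^ 2) * ((((1 + Complex.normSq (y p) : ℝ)) : ℂ) ^ 2) := by
    ring
  field_simp
  ring_nf
  simp only [Complex.I_sq]
  ring
end

section
/- Let U ⊆ ℂ be open, y : U → ℂ holomorphic, a, b, c > 0, and suppose there is a real constant ρ with (y′)² = ρ ( a²(1 − y²)² − b²(1 + y²)² + 4c² y² ) on U. Define f : U → ℝ³ by f = (2a Re y, 2b Im y, c(1 − |y|²)) / (1 + |y|²). Then f takes values in the ellipsoid {(x₁/a)² + (x₂/b)² + (x₃/c)² = 1} and the Euclidean inner product ⟨f_u, f_v⟩ vanishes identically on U; i.e. (u, v) are orthogonal (hence curvature line) parameters for the ellipsoid. (Paper: Section 2, leading to Lemma 2.1.) -/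
/-- The Euclidean inner product on `ℝ³`. -/
def BE (x y : ℝ × ℝ × ℝ) : ℝ := x.1 * y.1 + x.2.1 * y.2.1 + x.2.2 * y.2.2

set_option maxHeartbeats 2000000

/-- **Section 2, leading to Lemma 2.1.** If the holomorphic function `y` satisfies the
ODE `(y′)² = ρ (a²(1−y²)² − b²(1+y²)² + 4c²y²)` with a real constant `ρ`, then the map
`f = (2a Re y, 2b Im y, c(1−|y|²))/(1+|y|²)` takes values in the ellipsoid with half-axes
`a, b, c` and its parameter lines are orthogonal: `⟨f_u, f_v⟩ = 0`. -/
theorem ellipsoid_curvature_line_parameters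
    (U : Set ℂ) (hUopen : IsOpen U)
    (y : ℂ → ℂ) (hy : DifferentiableOn ℂ y U)
    (a b c : ℝ) (ha : 0 < a) (hb : 0 < b) (hc : 0 < c)
    (ρ : ℝ)
    (hode : ∀ z ∈ U,
      (deriv y z) ^ 2 =
        (ρ : ℂ) * ((a : ℂ) ^ 2 * (1 - y z ^ 2) ^ 2 - (b : ℂ) ^ 2 * (1 + y z ^ 2) ^ 2
          + 4 * (c : ℂ) ^ 2 * y z ^ 2))
    (f : ℂ → ℝ × ℝ × ℝ)
    (hf : ∀ z, f z =
      (2 * a * (y z).re / (1 + Complex.normSq (y z)),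
       2 * b * (y z).im / (1 + Complex.normSq (y z)),
       c * (1 - Complex.normSq (y z)) / (1 + Complex.normSq (y z)))) :
    ∀ p ∈ U,
      ((f p).1 / a) ^ 2 + ((f p).2.1 / b) ^ 2 + ((f p).2.2 / c) ^ 2 = 1 ∧
      BE (pdu f p) (pdv f p) = 0 := by
  intro p hp
  have hyd : DifferentiableAt ℂ y p := hy.differentiableAt (hUopen.mem_nhds hp)
  set d := deriv y p with hd
  have hder : HasFDerivAt y ((ContinuousLinearMap.smulRight (1 : ℂ →L[ℂ] ℂ) d).restrictScalars ℝ) p :=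
    (hyd.hasDerivAt.hasFDerivAt).restrictScalars ℝ
  set L := (ContinuousLinearMap.smulRight (1 : ℂ →L[ℂ] ℂ) d).restrictScalars ℝ with hL
  have hX : HasFDerivAt (fun z => (y z).re) (Complex.reCLM.comp L) p :=
    (Complex.reCLM.hasFDerivAt).comp p hder
  have hW : HasFDerivAt (fun z => (y z).im) (Complex.imCLM.comp L) p :=
    (Complex.imCLM.hasFDerivAt).comp p hder
  have hS := (hX.mul hX).add (hW.mul hW)
  have hN := hS.const_add 1
  have hNne : (1 : ℝ) + ((y p).re * (y p).re + (y p).im * (y p).im) ≠ 0 := by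
    nlinarith [mul_self_nonneg (y p).re, mul_self_nonneg (y p).im]
  have hinv : HasFDerivAt (fun z => (1 + ((y z).re * (y z).re + (y z).im * (y z).im))⁻¹)
      ((-ContinuousLinearMap.mulLeftRight ℝ ℝ
          (1 + ((y p).re * (y p).re + (y p).im * (y p).im))⁻¹
          (1 + ((y p).re * (y p).re + (y p).im * (y p).im))⁻¹).comp
        ((y p).re • Complex.reCLM.comp L + (y p).re • Complex.reCLM.comp L +
          ((y p).im • Complex.imCLM.comp L + (y p).im • Complex.imCLM.comp L))) p :=
    (hasFDerivAt_inv' hNne).comp p hN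
  have hg1 := (hX.const_mul (2*a)).mul hinv
  have hg2 := (hW.const_mul (2*b)).mul hinv
  have hg3 := ((hS.const_sub 1).const_mul c).mul hinv
  have hg : HasFDerivAt (fun z =>
      (2 * a * (y z).re * (1 + ((y z).re * (y z).re + (y z).im * (y z).im))⁻¹,
       2 * b * (y z).im * (1 + ((y z).re * (y z).re + (y z).im * (y z).im))⁻¹,
       c * (1 - ((y z).re * (y z).re + (y z).im * (y z).im)) * (1 + ((y z).re * (y z).re + (y z).im * (y z).im))⁻¹)) _ p :=
    HasFDerivAt.prodMk hg1 (HasFDerivAt.prodMk hg2 hg3)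
  have hfg : f = fun z =>
      (2 * a * (y z).re * (1 + ((y z).re * (y z).re + (y z).im * (y z).im))⁻¹,
       2 * b * (y z).im * (1 + ((y z).re * (y z).re + (y z).im * (y z).im))⁻¹,
       c * (1 - ((y z).re * (y z).re + (y z).im * (y z).im)) * (1 + ((y z).re * (y z).re + (y z).im * (y z).im))⁻¹) := by
    funext z; rw [hf z]; simp [Complex.normSq_apply, div_eq_mul_inv]
  constructor
  · rw [hf p]
    have hane : a ≠ 0 := ne_of_gt ha
    have hbne : b ≠ 0 := ne_of_gt hb
    have hcne : c ≠ 0 := ne_of_gt hc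
    have hNne2 : (1 : ℝ) + Complex.normSq (y p) ≠ 0 := by
      have := Complex.normSq_nonneg (y p); nlinarith
    field_simp
    rw [Complex.normSq_apply]
    ring
  · have hQ := hode p hp
    rw [Complex.ext_iff] at hQ
    obtain ⟨h1, h2⟩ := hQ
    simp only [pow_two, Complex.mul_re, Complex.mul_im, Complex.add_re, Complex.add_im,
      Complex.sub_re, Complex.sub_im, Complex.one_re, Complex.one_im, Complex.ofReal_re,
      Complex.ofReal_im, Complex.re_ofNat, Complex.im_ofNat] at h1 h2
    rw [BE, pdu, pdv, hfg, hg.fderiv]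
    simp only [ContinuousLinearMap.prod_apply, ContinuousLinearMap.smul_apply,
      ContinuousLinearMap.sub_apply, ContinuousLinearMap.add_apply, ContinuousLinearMap.neg_apply,
      ContinuousLinearMap.comp_apply, ContinuousLinearMap.smulRight_apply,
      ContinuousLinearMap.coe_restrictScalars', ContinuousLinearMap.one_apply,
      ContinuousLinearMap.mulLeftRight_apply,
      Complex.reCLM_apply, Complex.imCLM_apply, smul_eq_mul, one_smul,
      Complex.mul_re, Complex.mul_im, Complex.one_re, Complex.one_im,
      Complex.I_re, Complex.I_im]
    have hL1 : L 1 = d := by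
      simp [hL]
    have hLI : L Complex.I = Complex.I * d := by
      simp [hL, smul_eq_mul]
    rw [hL1, hLI]
    simp only [Complex.mul_re, Complex.mul_im, Complex.I_re, Complex.I_im, Pi.add_apply, Pi.mul_apply]
    set x := (y p).re with hx
    set w := (y p).im with hw
    set dr := d.re with hdr
    set di := d.im with hdi
    have key : (dr*di + di*dr) * (a*a*((1-(x*x-w*w))*(1-(x*x-w*w)) - (2*x*w)*(2*x*w)) - b*b*((1+(x*x-w*w))*(1+(x*x-w*w)) - (2*x*w)*(2*x*w)) + 4*c*c*(x*x-w*w))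
        - (dr*dr - di*di) * (a*a*(-2*(1-(x*x-w*w))*(2*x*w)) - b*b*(2*(1+(x*x-w*w))*(2*x*w)) + 4*c*c*(2*x*w)) = 0 := by
      linear_combination (a*a*((1-(x*x-w*w))*(1-(x*x-w*w)) - (2*x*w)*(2*x*w)) - b*b*((1+(x*x-w*w))*(1+(x*x-w*w)) - (2*x*w)*(2*x*w)) + 4*c*c*(x*x-w*w)) * h2 - (a*a*(-2*(1-(x*x-w*w))*(2*x*w)) - b*b*(2*(1+(x*x-w*w))*(2*x*w)) + 4*c*c*(2*x*w)) * h1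
    have hNne' : (1 : ℝ) + (x*x + w*w) ≠ 0 := hNne
    field_simp
    linear_combination (-2 : ℝ) * key
end

section
/- Let U ⊆ ℂ be open, y : U → ℂ holomorphic with |y| ≠ 1 on U, a, b, c > 0, and suppose there is a real constant ρ with (y′)² = ρ ( a²(1 + y²)² − b²(1 − y²)² − 4c² y² ) on U. Define f : U → ℝ³ by f = (2a Re y, 2b Im y, c(1 + |y|²)) / (1 − |y|²). Then f takes values in the 2-sheeted hyperboloid {(x₁/a)² + (x₂/b)² − (x₃/c)² = −1} and B_M(f_u, f_v) = 0 identically on U, where B_M is the Minkowski bilinear form; i.e. (u, v) are orthogonal (hence curvature line) parameters for the hyperboloid in Minkowski space. (Paper: Section 4, derivation of equation (orthoH2M) and Lemma 4.1.) -/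
set_option maxHeartbeats 4000000


/-- The Minkowski bilinear form on `ℝ³`. -/
def BM (x y : ℝ × ℝ × ℝ) : ℝ := x.1 * y.1 + x.2.1 * y.2.1 - x.2.2 * y.2.2

/-- **Section 4, (orthoH2M) and Lemma 4.1.** If the holomorphic function `y` (with `|y| ≠ 1`)
satisfies the ODE `(y′)² = ρ (a²(1+y²)² − b²(1−y²)² − 4c²y²)` with a real constant `ρ`, then
the map `f = (2a Re y, 2b Im y, c(1+|y|²))/(1−|y|²)` takes values in the 2-sheeted hyperboloid
and its parameter lines are Minkowski-orthogonal: `B_M(f_u, f_v) = 0`. -/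
theorem hyperboloid_curvature_line_parameters
    (U : Set ℂ) (hUopen : IsOpen U)
    (y : ℂ → ℂ) (hy : DifferentiableOn ℂ y U)
    (hy1 : ∀ z ∈ U, ‖y z‖ ≠ 1)
    (a b c : ℝ) (ha : 0 < a) (hb : 0 < b) (hc : 0 < c)
    (ρ : ℝ)
    (hode : ∀ z ∈ U,
      (deriv y z) ^ 2 =
        (ρ : ℂ) * ((a : ℂ) ^ 2 * (1 + y z ^ 2) ^ 2 - (b : ℂ) ^ 2 * (1 - y z ^ 2) ^ 2
          - 4 * (c : ℂ) ^ 2 * y z ^ 2))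
    (f : ℂ → ℝ × ℝ × ℝ)
    (hf : ∀ z, f z =
      (2 * a * (y z).re / (1 - Complex.normSq (y z)),
       2 * b * (y z).im / (1 - Complex.normSq (y z)),
       c * (1 + Complex.normSq (y z)) / (1 - Complex.normSq (y z)))) :
    ∀ p ∈ U,
      ((f p).1 / a) ^ 2 + ((f p).2.1 / b) ^ 2 - ((f p).2.2 / c) ^ 2 = -1 ∧
      BM (pdu f p) (pdv f p) = 0 := by
  intro p hp
  have hD : 1 - Complex.normSq (y p) ≠ 0 := by
    intro h
    apply hy1 p hp
    have : Complex.normSq (y p) = 1 := by linarith [h]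
    rw [← Complex.sq_norm] at this
    nlinarith [norm_nonneg (y p)]
  have hD' : 1 - ((y p).re * (y p).re + (y p).im * (y p).im) ≠ 0 := by
    rwa [← Complex.normSq_apply]
  constructor
  · rw [hf p]
    field_simp [Complex.normSq_apply] at *
    ring_nf
    simp only [Complex.normSq_apply]
    ring
  · -- derivative setup
    have hyd : DifferentiableAt ℂ y p := hy.differentiableAt (hUopen.mem_nhds hp)
    have hyD : HasDerivAt y (deriv y p) p := hyd.hasDerivAt
    have hyF := hyD.hasFDerivAt.restrictScalars ℝ
    have hre := (Complex.reCLM.hasFDerivAt (x := y p)).comp p hyF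
    have him := (Complex.imCLM.hasFDerivAt (x := y p)).comp p hyF
    have hden := (hasFDerivAt_const (1:ℝ) p).sub ((hre.mul hre).add (him.mul him))
    have hinv := (hasFDerivAt_inv' (𝕜 := ℝ) (R := ℝ) hD').comp p hden
    have hF0 := HasFDerivAt.prodMk ((hre.const_mul (2*a)).mul hinv)
      (HasFDerivAt.prodMk ((him.const_mul (2*b)).mul hinv)
        ((((hasFDerivAt_const (1:ℝ) p).add ((hre.mul hre).add (him.mul him))).const_mul c).mul hinv))
    have hF : HasFDerivAt f _ p := hF0.congr_of_eventuallyEq (by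
      filter_upwards with z
      rw [hf z]
      simp only [Complex.normSq_apply, Function.comp, div_eq_mul_inv,
        Complex.reCLM_apply, Complex.imCLM_apply, Pi.mul_apply, Pi.sub_apply, Pi.add_apply])
    set d := deriv y p with hd
    set Pc : ℂ := (a : ℂ) ^ 2 * (1 + y p * y p) ^ 2 - (b : ℂ) ^ 2 * (1 - y p * y p) ^ 2
        - 4 * (c : ℂ) ^ 2 * (y p * y p) with hPc
    have key : ((d * d) * (starRingEnd ℂ) Pc).im = 0 := by
      have h2 : d * d = (ρ : ℂ) * Pc := by
        rw [← sq, hode p hp, hPc, ← sq]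
      rw [h2, mul_assoc, Complex.mul_conj]
      simp
    have hBM : BM (pdu f p) (pdv f p)
        = -2 * ((d * d) * (starRingEnd ℂ) Pc).im / (1 - Complex.normSq (y p))^4 := by
      unfold pdu pdv BM
      rw [hF.fderiv]
      simp only [ContinuousLinearMap.prod_apply, ContinuousLinearMap.add_apply,
        ContinuousLinearMap.smul_apply, ContinuousLinearMap.comp_apply,
        ContinuousLinearMap.coe_restrictScalars', ContinuousLinearMap.smulRight_apply,
        ContinuousLinearMap.one_apply, ContinuousLinearMap.sub_apply,
        ContinuousLinearMap.zero_apply, ContinuousLinearMap.neg_apply,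
        ContinuousLinearMap.mulLeftRight_apply,
        Complex.reCLM_apply, Complex.imCLM_apply, Function.comp,
        one_smul, smul_eq_mul, Complex.smul_re, Complex.smul_im,
        Pi.mul_apply, Pi.sub_apply, Pi.add_apply, ContinuousLinearMap.toSpanSingleton_apply]
      simp only [hPc, Complex.mul_im, Complex.mul_re, Complex.sub_im, Complex.sub_re,
        Complex.add_im, Complex.add_re, Complex.one_im, Complex.one_re,
        Complex.ofReal_im, Complex.ofReal_re, Complex.conj_re, Complex.conj_im,
        Complex.normSq_apply, Complex.I_re, Complex.I_im, pow_two,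
        Complex.re_ofNat, Complex.im_ofNat, map_sub, map_mul, map_add, map_one,
        Complex.conj_ofReal, map_ofNat]
      field_simp
      ring
    rw [hBM, key]
    simp
end
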